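/- Let M be a matroid flock on E, let α ∈ ℤ^E and let I ⊆ E. Then M_α/I = M_{α+e_I}\I, where e_I := Σ_{i∈I} e_i and N/I, N\I denote contraction and deletion of the set I. -/

import Mathlib

open Matroid Set

namespace FrobFlock

variable {E : Type*}

/-- The local rank function of a matroid: the size of a largest independent subset of `X`. -/
noncomputable def rk (M : Matroid E) (X : Set E) : ℕ :=
  sSup {n | ∃ I, I ⊆ X ∧ M.Indep I ∧ I.ncard = n}

/-- Deletion of the set `D` from the matroid `M`. -/
def mdel (M : Matroid E) (D : Set E) : Matroid E := M ↾ (M.E \ D)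

/-- Contraction of the set `C` in the matroid `M` (defined by duality). -/
def mcon (M : Matroid E) (C : Set E) : Matroid E := (mdel M✶ C)✶

/-- The 0/1 indicator vector of a set `I ⊆ E`. -/
noncomputable def eVec (I : Set E) : E → ℤ := I.indicator 1

/-- `M : ℤ^E → Matroid E` is a matroid flock of rank `d` on `E`:
each `M α` is a matroid on ground set `E` of rank `d`, satisfying (MF1) and (MF2). -/
def IsMatroidFlock [Fintype E] (d : ℕ) (M : (E → ℤ) → Matroid E) : Prop :=
  (∀ α, (M α).E = Set.univ) ∧
  (∀ α, rk (M α) Set.univ = d) ∧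
  (∀ α (i : E), mcon (M α) {i} = mdel (M (α + eVec {i})) {i}) ∧
  (∀ α, M α = M (α + 1))

/-- A matroid valuation `ν : binom(E,d) → ℤ ∪ {∞}`, encoded as a function on all finsets
which takes the value `⊤` outside `binom(E,d)`. -/
def IsValuation [DecidableEq E] (d : ℕ) (ν : Finset E → WithTop ℤ) : Prop :=
  (∀ B : Finset E, B.card ≠ d → ν B = ⊤) ∧
  (∃ B : Finset E, B.card = d ∧ ν B ≠ ⊤) ∧
  (∀ B B' : Finset E, B.card = d → B'.card = d → ∀ i ∈ B \ B', ∃ j ∈ B' \ B,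
      ν (insert j (B.erase i)) + ν (insert i (B'.erase j)) ≤ ν B + ν B')

/-- `B ∈ B^ν_α`: the set `B` attains the supremum `g^ν(α)`, i.e. `B` is a basis of `M^ν_α`. -/
def OptBasis (d : ℕ) (ν : Finset E → WithTop ℤ) (α : E → ℤ) (B : Finset E) : Prop :=
  B.card = d ∧ ν B ≠ ⊤ ∧ ∀ B' : Finset E, B'.card = d →
    ((∑ i ∈ B', α i : ℤ) : WithTop ℤ) + ν B ≤ ((∑ i ∈ B, α i : ℤ) : WithTop ℤ) + ν B'


section MinorLemmas

variable {M : Matroid E} {C D I X : Set E}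

lemma mdel_ground (M : Matroid E) (D : Set E) : (mdel M D).E = M.E \ D := rfl

lemma mcon_ground (M : Matroid E) (C : Set E) : (mcon M C).E = M.E \ C := rfl

lemma mcon_dual (M : Matroid E) (C : Set E) : (mcon M C)✶ = mdel M✶ C := by
  rw [mcon, Matroid.dual_dual]

lemma mdel_empty (M : Matroid E) : mdel M ∅ = M := by
  rw [mdel, diff_empty, Matroid.restrict_ground_eq_self]

lemma mcon_empty (M : Matroid E) : mcon M ∅ = M := by
  rw [mcon, mdel_empty, Matroid.dual_dual]

lemma mdel_mdel (M : Matroid E) (D₁ D₂ : Set E) :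
    mdel (mdel M D₁) D₂ = mdel M (D₁ ∪ D₂) := by
  have h1 : (mdel M D₁).E = M.E \ D₁ := rfl
  rw [mdel, h1, mdel, mdel, diff_diff]
  exact M.restrict_restrict_eq (diff_subset_diff_right subset_union_left)

lemma mcon_mcon (M : Matroid E) (C₁ C₂ : Set E) :
    mcon (mcon M C₁) C₂ = mcon M (C₁ ∪ C₂) := by
  rw [mcon, mcon_dual, mdel_mdel, ← mcon]

/-- The independence characterization of contraction: `I` is independent in `M / C`
iff `I ⊆ M.E \ C` and `I ∪ J` is independent for some basis `J` of `C`. -/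
lemma mcon_indep_iff (hC : C ⊆ M.E) :
    (mcon M C).Indep I ↔ I ⊆ M.E \ C ∧ ∃ J, M.IsBasis J C ∧ M.Indep (I ∪ J) := by
  have hR : M.E \ C ⊆ M✶.E := diff_subset
  have hgr : (mdel M✶ C).E = M.E \ C := rfl
  rw [mcon, Matroid.dual_indep_iff_exists', hgr]
  constructor
  · rintro ⟨hIR, B, hB, hdj⟩
    refine ⟨hIR, ?_⟩
    rw [mdel, Matroid.isBase_restrict_iff', Matroid.dual_ground,
      Matroid.isBasis'_iff_isBasis hR] at hB
    obtain ⟨B', hB', hBB'⟩ := hB.indep.exists_isBase_superset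
    have hBeq : B = B' ∩ (M.E \ C) :=
      hB.eq_of_subset_indep (hB'.indep.subset inter_subset_left)
        (subset_inter hBB' hB.subset) inter_subset_right
    have hbasis : M✶.IsBasis (B' ∩ (M.E \ C)) (M.E \ C) := hBeq ▸ hB
    have hdualbasis := (hB'.inter_isBasis_iff_compl_inter_isBasis_dual hR).mp hbasis
    rw [Matroid.dual_dual, Matroid.dual_ground,
      diff_diff_cancel_left hC] at hdualbasis
    refine ⟨(M.E \ B') ∩ C, hdualbasis, ?_⟩
    have hKbase : M.IsBase (M.E \ B') := hB'.compl_isBase_of_dual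
    refine hKbase.indep.subset (union_subset ?_ inter_subset_left)
    intro x hxI
    refine ⟨(hIR hxI).1, fun hxB' => ?_⟩
    exact hdj.ne_of_mem hxI (hBeq ▸ ⟨hxB', hIR hxI⟩) rfl
  · rintro ⟨hIR, J, hJ, hIJ⟩
    refine ⟨hIR, ?_⟩
    obtain ⟨K, hK, hIJK⟩ := hIJ.exists_isBase_superset
    have hJeq : J = K ∩ C :=
      hJ.eq_of_subset_indep (hK.indep.subset inter_subset_left)
        (subset_inter (subset_union_right.trans hIJK) hJ.subset) inter_subset_right
    have hbasis : M.IsBasis (K ∩ C) C := hJeq ▸ hJ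
    have hdualbasis := (hK.inter_isBasis_iff_compl_inter_isBasis_dual hC).mp hbasis
    refine ⟨(M.E \ K) ∩ (M.E \ C), ?_, ?_⟩
    · rw [mdel, Matroid.isBase_restrict_iff', Matroid.dual_ground,
        Matroid.isBasis'_iff_isBasis hR]
      exact hdualbasis
    · exact Disjoint.mono_right inter_subset_left
        (disjoint_sdiff_right.mono_left (subset_union_left.trans hIJK))

/-- Contraction and deletion of disjoint sets commute. -/
lemma mcon_mdel_comm (hC : C ⊆ M.E) (hD : D ⊆ M.E) (hCD : Disjoint C D) :
    mcon (mdel M D) C = mdel (mcon M C) D := by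
  have hCD' : C ⊆ M.E \ D := subset_diff.mpr ⟨hC, hCD⟩
  have hgr1 : (mdel M D).E = M.E \ D := rfl
  have hgr2 : (mcon (mdel M D) C).E = (M.E \ D) \ C := rfl
  have hgr3 : (mdel (mcon M C) D).E = (M.E \ C) \ D := rfl
  refine Matroid.ext_indep (by rw [hgr2, hgr3, diff_diff_comm]) ?_
  intro I hI
  rw [hgr2] at hI
  have hIMC : I ⊆ (M.E \ C) \ D := by rwa [diff_diff_comm] at hI
  have hbasis_iff : ∀ J, (mdel M D).IsBasis J C ↔ M.IsBasis J C := by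
    intro J
    rw [mdel, Matroid.isBasis_restrict_iff', inter_eq_self_of_subset_left hC,
      and_iff_left hCD']
  have hindep_iff : ∀ J : Set E, (mdel M D).Indep J ↔ M.Indep J ∧ J ⊆ M.E \ D :=
    fun J => Matroid.restrict_indep_iff
  rw [mcon_indep_iff (show C ⊆ (mdel M D).E from hgr1 ▸ hCD'), hgr1,
    show (mdel (mcon M C) D).Indep I ↔ (mcon M C).Indep I ∧ I ⊆ (mcon M C).E \ D from
      Matroid.restrict_indep_iff,
    mcon_indep_iff hC, mcon_ground]
  simp only [hbasis_iff, hindep_iff]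
  constructor
  · rintro ⟨hI1, J, hJ, hIJ, -⟩
    exact ⟨⟨hIMC.trans diff_subset, J, hJ, hIJ⟩, hIMC⟩
  · rintro ⟨⟨-, J, hJ, hIJ⟩, hI2⟩
    refine ⟨by rwa [diff_diff_comm] at hI2, J, hJ, hIJ,
      union_subset (hI2.trans (diff_subset_diff_left diff_subset)) (hJ.subset.trans hCD')⟩

lemma eVec_empty : eVec (∅ : Set E) = 0 := by
  funext x
  simp [eVec]

lemma eVec_insert {i : E} {s : Set E} (his : i ∉ s) :
    eVec (insert i s) = eVec s + eVec {i} := by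
  funext x
  simp only [eVec, Set.indicator, Pi.add_apply, Set.mem_insert_iff, Set.mem_singleton_iff]
  by_cases hx : x = i
  · subst hx
    simp [his]
  · by_cases hxs : x ∈ s <;> simp [hx, hxs]

end MinorLemmas

/-- **Lemma.** Let `M` be a matroid flock on `E`, let `α ∈ ℤ^E` and let `I ⊆ E`.
Then `M_α / I = M_{α+e_I} \ I`. -/
theorem flock_contract_eq_delete [Fintype E] (d : ℕ) (M : (E → ℤ) → Matroid E)
    (hM : IsMatroidFlock d M) (α : E → ℤ) (I : Set E) :
    mcon (M α) I = mdel (M (α + eVec I)) I := by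
  obtain ⟨hE, -, hMF1, -⟩ := hM
  have key : ∀ J : Set E, J.Finite → ∀ β, mcon (M β) J = mdel (M (β + eVec J)) J := by
    intro J hJ
    refine Set.Finite.induction_on J hJ ?_ ?_
    · intro β
      rw [mcon_empty, eVec_empty, add_zero, mdel_empty]
    · intro i s his hs ih β
      have hins : insert i s = {i} ∪ s := by
        rw [Set.union_comm, Set.union_singleton]
      rw [hins, ← mcon_mcon, hMF1 β i]
      have hcomm : mcon (mdel (M (β + eVec {i})) {i}) s
          = mdel (mcon (M (β + eVec {i})) s) {i} := by
        refine mcon_mdel_comm ?_ ?_ ?_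
        · rw [hE]; exact Set.subset_univ _
        · rw [hE]; exact Set.subset_univ _
        · exact Set.disjoint_singleton_right.mpr his
      rw [hcomm, ih (β + eVec {i}), mdel_mdel, Set.union_comm s {i}]
      congr 2
      rw [← hins, eVec_insert his]
      abel
  exact key I (Set.toFinite I) α

end FrobFlock
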